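/- arXiv:0710.2233 — 7 statements merged into one kernel-verified Lean document; each statement's English description precedes it below -/
import Mathlib

section
/- Let m > 1 be an integer and let μ, ν be roots of unity in ℂ with μ ≠ 1. If (1 + ν^m)(1 - μ)^m = (1 - μ^m)(1 - ν)^m, then μ^m = 1 and ν^m = -1. -/
/-- A root of unity: a complex number `z` with `z ^ n = 1` for some positive integer `n`. -/
def IsRootOfUnity (z : ℂ) : Prop := ∃ n : ℕ, 0 < n ∧ z ^ n = 1

lemma rootOfUnity_conj_eq_inv {z : ℂ} (h : IsRootOfUnity z) :
    z ≠ 0 ∧ (starRingEnd ℂ) z = z⁻¹ := by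
  obtain ⟨n, hn, h1⟩ := h
  have hz0 : z ≠ 0 := by
    rintro rfl
    rw [zero_pow hn.ne'] at h1
    exact zero_ne_one h1
  refine ⟨hz0, ?_⟩
  have habs1 : ‖z‖ = 1 :=
    Complex.norm_eq_one_of_pow_eq_one h1 hn.ne'
  have hns : Complex.normSq z = 1 := by
    rw [← Complex.sq_norm, habs1, one_pow]
  rw [Complex.inv_def, hns]
  simp

theorem beukers_diophantine_three (m : ℕ) (hm : 1 < m) (μ ν : ℂ)
    (hμ : IsRootOfUnity μ) (hν : IsRootOfUnity ν) (hμ1 : μ ≠ 1)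
    (heq : (1 + ν ^ m) * (1 - μ) ^ m = (1 - μ ^ m) * (1 - ν) ^ m) :
    μ ^ m = 1 ∧ ν ^ m = -1 := by
  obtain ⟨hμ0, hcμ⟩ := rootOfUnity_conj_eq_inv hμ
  obtain ⟨hν0, hcν⟩ := rootOfUnity_conj_eq_inv hν
  have heq2 := congrArg (starRingEnd ℂ) heq
  simp only [map_mul, map_pow, map_add, map_sub, map_one, hcμ, hcν] at heq2
  -- heq2 : (1 + (ν⁻¹)^m) * (1 - μ⁻¹)^m = (1 - (μ⁻¹)^m) * (1 - ν⁻¹)^m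
  have h3 : (ν ^ m * (1 + ν⁻¹ ^ m)) * (μ ^ m * (1 - μ⁻¹) ^ m)
      = (μ ^ m * (1 - μ⁻¹ ^ m)) * (ν ^ m * (1 - ν⁻¹) ^ m) := by
    linear_combination (μ ^ m * ν ^ m) * heq2
  have e1 : ν ^ m * (1 + ν⁻¹ ^ m) = ν ^ m + 1 := by
    rw [inv_pow, mul_add, mul_one, mul_inv_cancel₀ (pow_ne_zero m hν0)]
  have e2 : μ ^ m * (1 - μ⁻¹) ^ m = (μ - 1) ^ m := by
    rw [← mul_pow, mul_sub, mul_one, mul_inv_cancel₀ hμ0]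
  have e3 : μ ^ m * (1 - μ⁻¹ ^ m) = μ ^ m - 1 := by
    rw [inv_pow, mul_sub, mul_one, mul_inv_cancel₀ (pow_ne_zero m hμ0)]
  have e4 : ν ^ m * (1 - ν⁻¹) ^ m = (ν - 1) ^ m := by
    rw [← mul_pow, mul_sub, mul_one, mul_inv_cancel₀ hν0]
  rw [e1, e2, e3, e4] at h3
  have hm1 : (μ - 1) ^ m = (-1) ^ m * (1 - μ) ^ m := by
    rw [show μ - 1 = -(1 - μ) from by ring, neg_pow]
  have hn1 : (ν - 1) ^ m = (-1) ^ m * (1 - ν) ^ m := by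
    rw [show ν - 1 = -(1 - ν) from by ring, neg_pow]
  rw [hm1, hn1] at h3
  have hne : ((-1 : ℂ)) ^ m ≠ 0 := pow_ne_zero _ (by norm_num)
  have h4 : (ν ^ m + 1) * (1 - μ) ^ m = (μ ^ m - 1) * (1 - ν) ^ m := by
    apply mul_left_cancel₀ hne
    linear_combination h3
  have h5 : (1 + ν ^ m) * (1 - μ) ^ m = 0 := by
    linear_combination (heq + h4) / 2
  have hμsub : (1 - μ) ^ m ≠ 0 :=
    pow_ne_zero _ (sub_ne_zero.mpr (fun h => hμ1 h.symm))
  have hνm : ν ^ m = -1 := by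
    have h6 := (mul_eq_zero.mp h5).resolve_right hμsub
    linear_combination h6
  have hν1 : (1 : ℂ) - ν ≠ 0 := by
    intro h
    have : ν = 1 := by linear_combination -h
    rw [this, one_pow] at hνm
    norm_num at hνm
  have h7 : (1 - μ ^ m) * (1 - ν) ^ m = 0 := heq.symm.trans h5
  have h8 := (mul_eq_zero.mp h7).resolve_right (pow_ne_zero _ hν1)
  exact ⟨by linear_combination -h8, hνm⟩
end

section
/- Let m be a positive integer and let ν be a root of unity in ℂ such that (1 + ν^m)·2^(m-1) = (1 - ν)^m. Then ν = -1 and m is even. -/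
open Polynomial

lemma beukers_key (m : ℕ) (hm : 3 ≤ m) (d : ℕ) (hd : 3 ≤ d) (ν : ℂ)
    (hprim : IsPrimitiveRoot ν d)
    (heq : (1 + ν ^ m) * 2 ^ (m - 1) = (1 - ν) ^ m) : False := by
  have hd0 : 0 < d := by omega
  set P : ℚ[X] := (1 - X) ^ m - C ((2 : ℚ) ^ (m - 1)) * (1 + X ^ m) with hP
  have hroot : aeval ν P = 0 := by
    simp only [hP, map_sub, map_mul, map_add, map_pow, map_one, aeval_X, aeval_C, map_ofNat]
    linear_combination -heq
  have hdvd : cyclotomic d ℚ ∣ P := by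
    rw [cyclotomic_eq_minpoly_rat hprim hd0]
    exact minpoly.dvd ℚ ν hroot
  -- move to the cyclotomic field
  set n' : ℕ+ := ⟨d, hd0⟩ with hn'
  letI K := CyclotomicField n' ℚ
  haveI : NeZero ((n' : ℕ) : ℚ) := ⟨by exact_mod_cast hd0.ne'⟩
  haveI : NeZero d := ⟨hd0.ne'⟩
  haveI : NeZero (n' : ℕ) := ⟨hd0.ne'⟩
  haveI : IsCyclotomicExtension {(n' : ℕ)} ℚ K := CyclotomicField.isCyclotomicExtension (n' : ℕ) ℚ
  haveI : IsCyclotomicExtension {d} ℚ K := CyclotomicField.isCyclotomicExtension (n' : ℕ) ℚ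
  set ζ : K := IsCyclotomicExtension.zeta n' ℚ K with hζdef
  have hζ : IsPrimitiveRoot ζ (n' : ℕ) := IsCyclotomicExtension.zeta_spec n' ℚ K
  have hζroot : aeval ζ P = 0 := by
    obtain ⟨Q, hQ⟩ := hdvd
    have h1 : aeval ζ (cyclotomic d ℚ) = 0 := by
      have h2 := hζ.isRoot_cyclotomic hd0
      rwa [IsRoot.def, ← map_cyclotomic d (algebraMap ℚ K), eval_map, ← aeval_def] at h2
    rw [hQ, map_mul, h1, zero_mul]
  have hKeq : (1 - ζ) ^ m = ((algebraMap ℚ K) 2) ^ (m - 1) * (1 + ζ ^ m) := by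
    simp only [hP, map_sub, map_mul, map_add, map_pow, map_one, aeval_X, aeval_C] at hζroot
    linear_combination hζroot
  haveI := IsCyclotomicExtension.finiteDimensional {(n' : ℕ)} ℚ K
  have hirr : Irreducible (cyclotomic (n' : ℕ) ℚ) := cyclotomic.irreducible_rat hd0
  set D := Module.finrank ℚ K with hDdef
  have hD : D = d.totient := IsCyclotomicExtension.finrank K hirr
  set a : ℤ := eval 1 (cyclotomic d ℤ) with ha
  have hnorm1 : Algebra.norm ℚ (ζ - 1) = (a : ℚ) :=
    hζ.sub_one_norm_eq_eval_cyclotomic (by exact_mod_cast hd) hirr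
  have hnormsub : Algebra.norm ℚ (1 - ζ) = (-1 : ℚ) ^ D * (a : ℚ) := by
    have h1 : (1 - ζ) = (algebraMap ℚ K) (-1) * (ζ - 1) := by
      rw [map_neg, map_one]; ring
    rw [h1, map_mul, Algebra.norm_algebraMap, hnorm1]
  -- take norms of the equation
  have hN := congrArg (Algebra.norm ℚ) hKeq
  rw [map_pow, map_mul, map_pow, Algebra.norm_algebraMap, hnormsub] at hN
  -- the norm of 1 + ζ^m is an integer
  have hζint : IsIntegral ℤ ζ := hζ.isIntegral hd0
  have hint : IsIntegral ℤ (1 + ζ ^ m) := isIntegral_one.add (hζint.pow m)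
  have hqint : IsIntegral ℤ (Algebra.norm ℚ (1 + ζ ^ m)) := Algebra.isIntegral_norm ℚ hint
  obtain ⟨z, hz⟩ := IsIntegrallyClosed.isIntegral_iff.mp hqint
  rw [← hz] at hN
  have hN' : ((-1 : ℚ) ^ D * (a : ℚ)) ^ m = (2 : ℚ) ^ ((m - 1) * D) * (z : ℚ) := by
    rw [hN, ← pow_mul, Nat.mul_comm, eq_intCast]
  have hZ : ((-1 : ℤ) ^ D * a) ^ m = 2 ^ ((m - 1) * D) * z := by exact_mod_cast hN'
  have key2 : (2 : ℤ) ^ ((m - 1) * D) ∣ a ^ m := by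
    have h2 : ((-1 : ℤ) ^ D * a) ^ m = (-1 : ℤ) ^ (D * m) * a ^ m := by
      rw [mul_pow, ← pow_mul]
    rcases Nat.even_or_odd (D * m) with h | h
    · exact ⟨z, by rw [← hZ, h2, h.neg_one_pow, one_mul]⟩
    · refine ⟨-z, ?_⟩
      rw [h2, h.neg_one_pow] at hZ
      linarith
  have hDpos : 0 < D := by
    rw [hD]; exact Nat.totient_pos.mpr hd0
  by_cases hpp : IsPrimePow d
  · obtain ⟨p, k, hp, hk, hpk⟩ := hpp
    haveI : Fact p.Prime := ⟨hp.nat_prime⟩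
    obtain ⟨k', rfl⟩ : ∃ k', k = k' + 1 := ⟨k - 1, by omega⟩
    have hav : a = (p : ℤ) := by
      rw [ha, ← hpk, eval_one_cyclotomic_prime_pow]
    by_cases hp2 : p = 2
    · subst hp2
      -- d = 2 ^ (k' + 1) ≥ 3, so k' ≥ 1 and D = 2 ^ k' ≥ 2
      have hk' : 1 ≤ k' := by
        by_contra h
        have : k' = 0 := by omega
        rw [this] at hpk; simp at hpk; omega
      have hDval : D = 2 ^ k' := by
        rw [hD, ← hpk, Nat.totient_prime_pow Nat.prime_two (by omega)]
        simp
      have hD2 : 2 ≤ D := by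
        rw [hDval]
        calc (2:ℕ) = 2 ^ 1 := (pow_one 2).symm
        _ ≤ 2 ^ k' := Nat.pow_le_pow_right (by norm_num) hk'
      rw [hav] at key2
      have key3 : (2 : ℤ) ^ ((m - 1) * D) ∣ (2 : ℤ) ^ m := by exact_mod_cast key2
      have : ((2:ℤ)^((m-1)*D)).natAbs ∣ ((2:ℤ)^m).natAbs := Int.natAbs_dvd_natAbs.mpr key3
      simp only [Int.natAbs_pow] at this
      norm_num at this
      have hle : (m - 1) * D ≤ m :=
        (Nat.pow_dvd_pow_iff_le_right (by norm_num : 1 < 2)).mp this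
      have h5 : (m - 1) * 2 ≤ (m - 1) * D := Nat.mul_le_mul le_rfl hD2
      omega
    · -- p odd prime : 2 ∤ p^m
      have h2d : (2 : ℤ) ∣ a ^ m := dvd_trans (dvd_pow_self 2 (Nat.mul_ne_zero (by omega) hDpos.ne')) key2
      rw [hav] at h2d
      have : (2 : ℕ) ∣ p ^ m := by exact_mod_cast h2d
      have := Nat.Prime.dvd_of_dvd_pow Nat.prime_two this
      exact hp2 ((Nat.prime_dvd_prime_iff_eq Nat.prime_two hp.nat_prime).mp this).symm
  · have hav : a = 1 := by
      rw [ha, eval_one_cyclotomic_not_prime_pow]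
      intro p hpp' k hpk
      exact hpp ⟨p, k, hpp'.prime, by
        rcases Nat.eq_zero_or_pos k with rfl | hk
        · simp at hpk; omega
        · exact ⟨hk, hpk⟩⟩
    rw [hav, one_pow] at key2
    have h1 : (2 : ℤ) ^ ((m - 1) * D) ≤ 1 := Int.le_of_dvd one_pos key2
    have hED : 1 ≤ (m - 1) * D := by
      have := Nat.mul_le_mul (by omega : 1 ≤ m - 1) hDpos
      simpa using this
    have h2 : (2 : ℤ) ^ 1 ≤ (2 : ℤ) ^ ((m - 1) * D) := pow_le_pow_right₀ (by norm_num) hED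
    norm_num at h2
    linarith

theorem beukers_proposition (m : ℕ) (hm : 0 < m) (ν : ℂ)
    (hν : IsRootOfUnity ν)
    (heq : (1 + ν ^ m) * 2 ^ (m - 1) = (1 - ν) ^ m) :
    ν = -1 ∧ Even m := by
  obtain ⟨n, hn, hpow⟩ := hν
  have hν0 : ν ≠ 0 := by
    intro h; rw [h] at hpow; simp [zero_pow hn.ne'] at hpow
  have hfin : IsOfFinOrder ν := isOfFinOrder_iff_pow_eq_one.mpr ⟨n, hn, hpow⟩
  have hprim : IsPrimitiveRoot ν (orderOf ν) := IsPrimitiveRoot.orderOf ν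
  have hd0 : 0 < orderOf ν := hfin.orderOf_pos
  rcases (by omega : m = 1 ∨ m = 2 ∨ 3 ≤ m) with rfl | rfl | hm3
  · exfalso
    apply hν0
    norm_num at heq
    linear_combination heq / 2
  · have : ν = -1 := by
      have h2 : (ν + 1) ^ 2 = 0 := by
        have h := heq; norm_num at h; linear_combination h
      have h3 := pow_eq_zero_iff (n := 2) (by norm_num) |>.mp h2
      linear_combination h3
    exact ⟨this, ⟨1, rfl⟩⟩
  · -- m ≥ 3 : the order of ν must be at most 2
    have hdle : orderOf ν ≤ 2 := by
      by_contra h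
      exact beukers_key m hm3 (orderOf ν) (by omega) ν hprim heq
    have hνm1 : ν = -1 := by
      rcases (by omega : orderOf ν = 1 ∨ orderOf ν = 2) with h1 | h2
      · exfalso
        have : ν = 1 := orderOf_eq_one_iff.mp h1
        rw [this] at heq
        simp [zero_pow (by omega : m ≠ 0)] at heq
      · have hsq : ν ^ 2 = 1 := by rw [← h2]; exact pow_orderOf_eq_one ν
        have hne1 : ν ≠ 1 := by
          intro h; rw [h, orderOf_one] at h2; omega
        have : (ν - 1) * (ν + 1) = 0 := by linear_combination hsq
        rcases mul_eq_zero.mp this with h | h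
        · exact absurd (by linear_combination h) hne1
        · linear_combination h
    refine ⟨hνm1, ?_⟩
    rcases Nat.even_or_odd m with he | ho
    · exact he
    · exfalso
      rw [hνm1, ho.neg_one_pow] at heq
      norm_num at heq
      exact pow_ne_zero m (two_ne_zero : (2:ℂ) ≠ 0) heq.symm
end

section
/- Let m ≥ 1 be an integer. In ℂ[y]: the polynomial 1 + y + y² divides 1 + y^m - (1 + y)^m if and only if m ≡ 1 or 5 (mod 6), and the polynomial (1 + y + y²)² divides 1 + y^m - (1 + y)^m if and only if m ≡ 1 (mod 6). -/
open Polynomial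

/-- Divisibility of `1 + y^m - (1+y)^m` by `1 + y + y²` and its square, in terms of
congruences of `m` modulo 6. -/
theorem cyclotomic_divisor_of_scalar_G (m : ℕ) (hm : 1 ≤ m) :
    ((1 + X + X ^ 2 : Polynomial ℂ) ∣ (1 + X ^ m - (1 + X) ^ m) ↔
      m % 6 = 1 ∨ m % 6 = 5) ∧
    (((1 + X + X ^ 2 : Polynomial ℂ)) ^ 2 ∣ (1 + X ^ m - (1 + X) ^ m) ↔
      m % 6 = 1) := by
  set ω : ℂ := ⟨-1/2, Real.sqrt 3 / 2⟩ with hωdef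
  have h3 : (Real.sqrt 3) ^ 2 = 3 := Real.sq_sqrt (by norm_num)
  have hs_pos : (0:ℝ) < Real.sqrt 3 := Real.sqrt_pos.mpr (by norm_num)
  have hω : ω ^ 2 + ω + 1 = 0 := by
    apply Complex.ext <;>
      simp [hωdef, pow_two, Complex.mul_re, Complex.mul_im] <;> nlinarith [h3]
  have him : ω.im = Real.sqrt 3 / 2 := rfl
  have hω3 : ω ^ 3 = 1 := by linear_combination (ω - 1) * hω
  have hωne0 : ω ≠ 0 := by
    intro h; rw [h] at him; simp at him; linarith
  have hωne1 : ω ≠ -1 := by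
    intro h; rw [h] at him; simp at him; linarith
  have hne : ω ≠ ω ^ 2 := by
    intro h
    have h2 : ω ^ 2 = -1 - ω := by linear_combination hω
    rw [h2] at h
    have : (2:ℂ) * ω = -1 := by linear_combination h
    have := congrArg Complex.im this
    simp [Complex.mul_im, him] at this
  have hω6 : ω ^ 6 = 1 := by
    calc ω ^ 6 = (ω ^ 3) ^ 2 := by ring
    _ = 1 := by rw [hω3]; ring
  have h1ω6 : (1 + ω) ^ 6 = 1 := by
    have h1ω : 1 + ω = -ω ^ 2 := by linear_combination hω
    calc (1 + ω) ^ 6 = (-ω ^ 2) ^ 6 := by rw [h1ω]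
    _ = (ω ^ 3) ^ 4 := by ring
    _ = 1 := by rw [hω3]; ring
  have hω26 : (ω ^ 2) ^ 6 = 1 := by
    calc (ω ^ 2) ^ 6 = (ω ^ 3) ^ 4 := by ring
    _ = 1 := by rw [hω3]; ring
  have h1ω26 : (1 + ω ^ 2) ^ 6 = 1 := by
    have h1ω2 : 1 + ω ^ 2 = -ω := by linear_combination hω
    calc (1 + ω ^ 2) ^ 6 = (-ω) ^ 6 := by rw [h1ω2]
    _ = (ω ^ 3) ^ 2 := by ring
    _ = 1 := by rw [hω3]; ring
  -- periodicity
  have hper : ∀ (z : ℂ) (n : ℕ), z ^ 6 = 1 → z ^ n = z ^ (n % 6) := by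
    intro z n hz
    conv_lhs => rw [← Nat.div_add_mod n 6]
    rw [pow_add, pow_mul, hz, one_pow, one_mul]
  -- coprimality and factorization
  have hcop : IsCoprime (X - C ω) (X - C (ω ^ 2)) :=
    Polynomial.isCoprime_X_sub_C_of_isUnit_sub ((sub_ne_zero.mpr hne).isUnit)
  have hQ : (1 + X + X ^ 2 : Polynomial ℂ) = (X - C ω) * (X - C (ω ^ 2)) := by
    have e1 : (X - C ω) * (X - C (ω ^ 2)) = X ^ 2 - C (ω ^ 2 + ω) * X + C (ω ^ 3) := by
      simp only [map_add, map_pow]; ring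
    have e2 : ω ^ 2 + ω = -1 := by linear_combination hω
    rw [e1, e2, hω3, map_neg, map_one]; ring
  set P : Polynomial ℂ := 1 + X ^ m - (1 + X) ^ m with hPdef
  -- square divisibility criterion
  have sq_iff : ∀ (a : ℂ) (p : Polynomial ℂ),
      (X - C a) ^ 2 ∣ p ↔ p.eval a = 0 ∧ p.derivative.eval a = 0 := by
    intro a p
    constructor
    · rintro ⟨q, rfl⟩
      constructor
      · simp
      · simp [derivative_mul, derivative_pow]
    · rintro ⟨h1, h2⟩
      obtain ⟨q, rfl⟩ := (dvd_iff_isRoot).mpr h1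
      have hq : q.eval a = 0 := by simpa [derivative_mul] using h2
      obtain ⟨q', rfl⟩ := (dvd_iff_isRoot).mpr hq
      exact ⟨q', by ring⟩
  have key1 : (1 + X + X ^ 2 : Polynomial ℂ) ∣ P ↔ P.eval ω = 0 ∧ P.eval (ω ^ 2) = 0 := by
    rw [hQ]
    constructor
    · intro h
      exact ⟨dvd_iff_isRoot.mp ((dvd_mul_right _ _).trans h),
             dvd_iff_isRoot.mp ((dvd_mul_left _ _).trans h)⟩
    · rintro ⟨h1, h2⟩
      exact hcop.mul_dvd (dvd_iff_isRoot.mpr h1) (dvd_iff_isRoot.mpr h2)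
  have key2 : ((1 + X + X ^ 2 : Polynomial ℂ)) ^ 2 ∣ P ↔
      (P.eval ω = 0 ∧ P.derivative.eval ω = 0) ∧
      (P.eval (ω ^ 2) = 0 ∧ P.derivative.eval (ω ^ 2) = 0) := by
    rw [hQ, mul_pow]
    constructor
    · intro h
      exact ⟨(sq_iff _ _).mp ((dvd_mul_right _ _).trans h),
             (sq_iff _ _).mp ((dvd_mul_left _ _).trans h)⟩
    · rintro ⟨h1, h2⟩
      exact (hcop.pow).mul_dvd ((sq_iff _ _).mpr h1) ((sq_iff _ _).mpr h2)
  -- evaluations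
  have vω : P.eval ω = 1 + ω ^ (m % 6) - (1 + ω) ^ (m % 6) := by
    simp [hPdef, hper ω m hω6]
    rw [← hper (1 + ω) m h1ω6]
  have vω2 : P.eval (ω ^ 2) = 1 + (ω ^ 2) ^ (m % 6) - (1 + ω ^ 2) ^ (m % 6) := by
    simp [hPdef, hper (ω ^ 2) m hω26]
    rw [← hper (1 + ω ^ 2) m h1ω26]
  have hd : P.derivative = C (m : ℂ) * X ^ (m - 1) - C (m : ℂ) * (1 + X) ^ (m - 1) := by
    simp [hPdef, derivative_pow]
  have dω : P.derivative.eval ω =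
      (m : ℂ) * (ω ^ ((m - 1) % 6) - (1 + ω) ^ ((m - 1) % 6)) := by
    rw [hd]
    simp [hper ω (m-1) hω6]
    rw [← hper (1 + ω) (m-1) h1ω6]
    ring
  have dω2 : P.derivative.eval (ω ^ 2) =
      (m : ℂ) * ((ω ^ 2) ^ ((m - 1) % 6) - (1 + ω ^ 2) ^ ((m - 1) % 6)) := by
    rw [hd]
    simp [hper (ω ^ 2) (m-1) hω26]
    rw [← hper (1 + ω ^ 2) (m-1) h1ω26]
    ring
  have hmc : (m : ℂ) ≠ 0 := Nat.cast_ne_zero.mpr (by omega)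
  have hr : m % 6 = 0 ∨ m % 6 = 1 ∨ m % 6 = 2 ∨ m % 6 = 3 ∨ m % 6 = 4 ∨ m % 6 = 5 := by omega
  rcases hr with h | h | h | h | h | h
  · -- r = 0 : eval ω = 1 ≠ 0
    have hv : P.eval ω ≠ 0 := by rw [vω, h]; norm_num
    constructor
    · simp only [key1, h]
      constructor
      · rintro ⟨h1, -⟩; exact absurd h1 hv
      · rintro (h1 | h1) <;> exact absurd h1 (by norm_num)
    · simp only [key2, h]
      constructor
      · rintro ⟨⟨h1, -⟩, -⟩; exact absurd h1 hv
      · intro h1; exact absurd h1 (by norm_num)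
  · -- r = 1 : everything vanishes
    have h0 : (m - 1) % 6 = 0 := by omega
    have e1 : P.eval ω = 0 := by rw [vω, h]; ring
    have e2 : P.eval (ω ^ 2) = 0 := by rw [vω2, h]; ring
    have e3 : P.derivative.eval ω = 0 := by rw [dω, h0]; ring
    have e4 : P.derivative.eval (ω ^ 2) = 0 := by rw [dω2, h0]; ring
    refine ⟨?_, ?_⟩
    · rw [key1]; simp [e1, e2, h]
    · rw [key2]; simp [e1, e2, e3, e4, h]
  · -- r = 2 : eval ω = -2ω ≠ 0
    have hv : P.eval ω ≠ 0 := by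
      rw [vω, h]
      have : 1 + ω ^ 2 - (1 + ω) ^ 2 = -2 * ω := by ring
      rw [this]
      simpa using hωne0
    constructor
    · simp only [key1, h]
      constructor
      · rintro ⟨h1, -⟩; exact absurd h1 hv
      · rintro (h1 | h1) <;> exact absurd h1 (by norm_num)
    · simp only [key2, h]
      constructor
      · rintro ⟨⟨h1, -⟩, -⟩; exact absurd h1 hv
      · intro h1; exact absurd h1 (by norm_num)
  · -- r = 3 : eval ω = 3 ≠ 0
    have hv : P.eval ω ≠ 0 := by
      rw [vω, h]
      have : 1 + ω ^ 3 - (1 + ω) ^ 3 = 3 := by linear_combination (-3 : ℂ) * hω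
      rw [this]; norm_num
    constructor
    · simp only [key1, h]
      constructor
      · rintro ⟨h1, -⟩; exact absurd h1 hv
      · rintro (h1 | h1) <;> exact absurd h1 (by norm_num)
    · simp only [key2, h]
      constructor
      · rintro ⟨⟨h1, -⟩, -⟩; exact absurd h1 hv
      · intro h1; exact absurd h1 (by norm_num)
  · -- r = 4 : eval ω = 2 + 2ω ≠ 0
    have hv : P.eval ω ≠ 0 := by
      rw [vω, h]
      have e : 1 + ω ^ 4 - (1 + ω) ^ 4 = 2 + 2 * ω := by
        linear_combination (-2 - 4 * ω) * hω
      rw [e]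
      intro hc
      apply hωne1
      linear_combination hc / 2
    constructor
    · simp only [key1, h]
      constructor
      · rintro ⟨h1, -⟩; exact absurd h1 hv
      · rintro (h1 | h1) <;> exact absurd h1 (by norm_num)
    · simp only [key2, h]
      constructor
      · rintro ⟨⟨h1, -⟩, -⟩; exact absurd h1 hv
      · intro h1; exact absurd h1 (by norm_num)
  · -- r = 5 : evals vanish, derivative at ω does not
    have h4 : (m - 1) % 6 = 4 := by omega
    have e1 : P.eval ω = 0 := by
      rw [vω, h]
      linear_combination (-5 * ω - 5 * ω ^ 2) * hω
    have e2 : P.eval (ω ^ 2) = 0 := by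
      rw [vω2, h]
      linear_combination (-5 * ω ^ 2 + 5 * ω ^ 3 - 10 * ω ^ 4 + 5 * ω ^ 5 - 5 * ω ^ 6) * hω
    have e3 : P.derivative.eval ω ≠ 0 := by
      rw [dω, h4]
      have e : ω ^ 4 - (1 + ω) ^ 4 = ω - ω ^ 2 := by
        linear_combination (-1 - 4 * ω) * hω
      rw [e]
      exact mul_ne_zero hmc (sub_ne_zero.mpr hne)
    constructor
    · rw [key1]; simp [e1, e2, h]
    · simp only [key2, h]
      constructor
      · rintro ⟨⟨-, h1⟩, -⟩; exact absurd h1 e3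
      · intro h1; exact absurd h1 (by norm_num)
end

section
/- Let m ≥ 2 be an integer and r ∈ ℂ. Then r is a root of multiplicity at least 2 of the polynomial 1 + y^m - (1 + y)^m ∈ ℂ[y] (equivalently, 1 + r^m - (1+r)^m = 0 and m·r^{m-1} - m·(1+r)^{m-1} = 0) if and only if r^{m-1} = 1 and (1 + r)^{m-1} = 1. -/
/-- `r` is a multiple root of `1 + y^m - (1+y)^m` iff `r` and `1+r` are `(m-1)`-st roots
of unity. -/
theorem double_zeros_of_scalar_G (m : ℕ) (hm : 2 ≤ m) (r : ℂ) :
    (1 + r ^ m - (1 + r) ^ m = 0 ∧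
      (m : ℂ) * r ^ (m - 1) - (m : ℂ) * (1 + r) ^ (m - 1) = 0) ↔
    (r ^ (m - 1) = 1 ∧ (1 + r) ^ (m - 1) = 1) := by
  have hmm : m = (m - 1) + 1 := (Nat.succ_pred_eq_of_pos (by omega)).symm
  have hm0 : (m : ℂ) ≠ 0 := by
    exact_mod_cast Nat.cast_ne_zero.mpr (by omega)
  constructor
  · rintro ⟨h1, h2⟩
    have he : r ^ (m - 1) = (1 + r) ^ (m - 1) := by
      have := sub_eq_zero.mp h2
      exact mul_left_cancel₀ hm0 this
    rw [hmm, pow_succ, pow_succ, he] at h1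
    have ha : (1 + r) ^ (m - 1) = 1 := by
      have : 1 - (1 + r) ^ (m - 1) = 0 := by linear_combination h1
      linear_combination -this
    exact ⟨he.trans ha, ha⟩
  · rintro ⟨h1, h2⟩
    constructor
    · rw [hmm, pow_succ, pow_succ, h1, h2]; ring
    · rw [h1, h2]; ring
end

section
/- Let c, d ∈ ℂ be nonzero, let m ≥ 2 be an integer, and let r ∈ ℂ with r ≠ -1 be a root of multiplicity at least 2 of the polynomial f(y) = d·(1 + y^m) - c·(1 + y)^m ∈ ℂ[y]. Then r^{m-1} = 1, c·(1+r)^{m-1} = d, and the multiplicity of r as a root of f is exactly 2. -/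
open Polynomial

/-- Multiple roots `r ≠ -1` of `d(1 + y^m) - c(1+y)^m` satisfy `r^(m-1) = 1` and
`c(1+r)^(m-1) = d`, and are exactly double. -/
theorem double_zeros_B (c d : ℂ) (hc : c ≠ 0) (hd : d ≠ 0) (m : ℕ) (hm : 2 ≤ m)
    (r : ℂ) (hr : r ≠ -1)
    (hmult : 2 ≤ (C d * (1 + X ^ m) - C c * (1 + X) ^ m).rootMultiplicity r) :
    r ^ (m - 1) = 1 ∧ c * (1 + r) ^ (m - 1) = d ∧
      (C d * (1 + X ^ m) - C c * (1 + X) ^ m).rootMultiplicity r = 2 := by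
  obtain ⟨k, rfl⟩ : ∃ k, m = k + 2 := ⟨m - 2, by omega⟩
  set p : ℂ[X] := C d * (1 + X ^ (k + 2)) - C c * (1 + X) ^ (k + 2) with hp_def
  have hk2 : ((k : ℂ) + 2) ≠ 0 := by exact_mod_cast Nat.succ_ne_zero (k + 1)
  have hk1 : ((k : ℂ) + 1) ≠ 0 := by exact_mod_cast Nat.succ_ne_zero k
  have hr0 : (1 : ℂ) + r ≠ 0 := fun h => hr (by linear_combination h)
  have hder : derivative p = C d * ((k + 2 : ℂ[X]) * X ^ (k + 1)) -
      C c * ((k + 2 : ℂ[X]) * (1 + X) ^ (k + 1)) := by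
    simp [hp_def, derivative_pow, map_ofNat]
    try ring
  have hder2 : derivative (derivative p) =
      C d * ((k + 2 : ℂ[X]) * ((k + 1 : ℂ[X]) * X ^ k)) -
      C c * ((k + 2 : ℂ[X]) * ((k + 1 : ℂ[X]) * (1 + X) ^ k)) := by
    rw [hder]
    simp [derivative_pow, map_ofNat]
    try ring
  have hp : p ≠ 0 := by
    intro h
    have h0 : (derivative p).eval 0 = 0 := by rw [h]; simp
    rw [hder] at h0
    simp only [eval_sub, eval_mul, eval_C, eval_pow, eval_add, eval_one, eval_X,
      eval_natCast, eval_ofNat, zero_pow (Nat.succ_ne_zero k), mul_zero, zero_add,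
      add_zero, one_pow, mul_one, zero_sub, neg_eq_zero] at h0
    have : c * ((k : ℂ) + 2) = 0 := by linear_combination h0
    exact (mul_ne_zero hc hk2) this
  have h01 := (one_lt_rootMultiplicity_iff_isRoot (t := r) hp).mp (by omega)
  have e0 : d * (1 + r ^ (k + 2)) - c * (1 + r) ^ (k + 2) = 0 := by
    simpa [hp_def] using h01.1
  have e1 : d * r ^ (k + 1) = c * (1 + r) ^ (k + 1) := by
    have h1 := h01.2
    rw [hder] at h1
    simp only [IsRoot, eval_sub, eval_mul, eval_C, eval_pow, eval_add, eval_one,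
      eval_X, eval_natCast, eval_ofNat] at h1
    have hkey : ((k : ℂ) + 2) * (d * r ^ (k + 1) - c * (1 + r) ^ (k + 1)) = 0 := by
      linear_combination h1
    rcases mul_eq_zero.mp hkey with h' | h'
    · exact absurd h' hk2
    · exact sub_eq_zero.mp h'
  have hr1 : r ^ (k + 1) = 1 := by
    have hkey : d * (r ^ (k + 1) - 1) = 0 := by
      linear_combination (1 + r) * e1 - e0
    rcases mul_eq_zero.mp hkey with h | h
    · exact absurd h hd
    · exact sub_eq_zero.mp h
  have hrne : r ≠ 0 := by
    intro h
    rw [h] at hr1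
    simp at hr1
  have hc1 : c * (1 + r) ^ (k + 1) = d := by
    rw [← e1, hr1, mul_one]
  have hle : p.rootMultiplicity r ≤ 2 := by
    by_contra h
    push_neg at h
    have h2 := isRoot_iterate_derivative_of_lt_rootMultiplicity (p := p) (t := r) (n := 2) h
    rw [show (derivative^[2] p) = derivative (derivative p) from rfl, hder2] at h2
    simp only [IsRoot, eval_sub, eval_mul, eval_C, eval_pow, eval_add, eval_one,
      eval_X, eval_natCast, eval_ofNat] at h2
    have hkey : ((k : ℂ) + 2) * (((k : ℂ) + 1) * (d * r ^ k - c * (1 + r) ^ k)) = 0 := by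
      linear_combination h2
    have e2 : d * r ^ k = c * (1 + r) ^ k := by
      rcases mul_eq_zero.mp hkey with h' | h'
      · exact absurd h' hk2
      rcases mul_eq_zero.mp h' with h'' | h''
      · exact absurd h'' hk1
      · exact sub_eq_zero.mp h''
    have hz : d * r ^ k = 0 := by
      linear_combination (1 + r) * e2 - e1
    exact (mul_ne_zero hd (pow_ne_zero k hrne)) hz
  refine ⟨?_, ?_, le_antisymm hle hmult⟩
  · simpa using hr1
  · simpa using hc1
end

section
/- Let c, d ∈ ℂ be nonzero, let m ≥ 2 be an integer, and let r ∈ ℂ with r ≠ 0 be a root of multiplicity at least 2 of the polynomial g(y) = c - c·(1 + y)^m + d·y^m ∈ ℂ[y]. Then (1 + r)^{m-1} = 1, c = d·r^{m-1}, and the multiplicity of r as a root of g is exactly 2. -/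
open Polynomial

/-- Multiple roots `r ≠ 0` of `c - c(1+y)^m + d·y^m` satisfy `(1+r)^(m-1) = 1` and
`c = d·r^(m-1)`, and are exactly double. -/
theorem double_zeros_01 (c d : ℂ) (hc : c ≠ 0) (hd : d ≠ 0) (m : ℕ) (hm : 2 ≤ m)
    (r : ℂ) (hr : r ≠ 0)
    (hmult : 2 ≤ (C c - C c * (1 + X) ^ m + C d * X ^ m).rootMultiplicity r) :
    (1 + r) ^ (m - 1) = 1 ∧ c = d * r ^ (m - 1) ∧
      (C c - C c * (1 + X) ^ m + C d * X ^ m).rootMultiplicity r = 2 := by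
  set p : ℂ[X] := C c - C c * (1 + X) ^ m + C d * X ^ m with hp
  have hp0 : p ≠ 0 := by
    intro h; rw [h, rootMultiplicity_zero] at hmult; omega
  have h2 : ∀ n ≤ 1, (Polynomial.derivative^[n] p).IsRoot r :=
    (lt_rootMultiplicity_iff_isRoot_iterate_derivative hp0).1 (by omega)
  have h0 : p.eval r = 0 := h2 0 (by norm_num)
  have h1 : (Polynomial.derivative p).eval r = 0 := h2 1 le_rfl
  obtain ⟨k, rfl⟩ : ∃ k, m = k + 2 := ⟨m - 2, by omega⟩
  simp only [show k + 2 - 1 = k + 1 from rfl]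
  simp [hp, derivative_pow] at h0 h1
  have hk2 : ((k : ℂ) + 2) ≠ 0 := by
    exact_mod_cast (Nat.cast_ne_zero (R := ℂ)).2 (Nat.succ_ne_zero (k + 1))
  -- from the first derivative: c (1+r)^(k+1) = d r^(k+1)
  have hA : c * (1 + r) ^ (k + 1) = d * r ^ (k + 1) :=
    mul_left_cancel₀ hk2 (by linear_combination -h1)
  -- c = d r^(k+1)
  have hc2 : c = d * r ^ (k + 1) := by
    linear_combination h0 + (1 + r) * hA
  -- (1+r)^(k+1) = 1
  have hA1 : (1 + r) ^ (k + 1) = 1 :=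
    mul_left_cancel₀ hc (by linear_combination hA - hc2)
  refine ⟨hA1, hc2, ?_⟩
  -- exactly double: second derivative does not vanish
  have hrk : r ^ k ≠ 0 := pow_ne_zero _ hr
  have hsnd : (Polynomial.derivative^[2] p).eval r ≠ 0 := by
    simp only [hp, Function.iterate_succ, Function.iterate_zero, Function.comp_apply, id_eq]
    simp [derivative_pow]
    intro h
    have hkk : ((k : ℂ) + 2) * ((k : ℂ) + 1) ≠ 0 :=
      mul_ne_zero hk2 (Nat.cast_add_one_ne_zero k)
    have he : d * r ^ k = c * (1 + r) ^ k := mul_left_cancel₀ hkk (by linear_combination h)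
    have hz : d * r ^ k = 0 := by linear_combination (1 + r) * he + hA
    exact mul_ne_zero hd hrk hz
  by_contra hne
  have h3 : 2 < p.rootMultiplicity r := lt_of_le_of_ne hmult (Ne.symm hne)
  exact hsnd (((lt_rootMultiplicity_iff_isRoot_iterate_derivative hp0).1 h3) 2 le_rfl)
end

section
/- The pairs (x, y) of roots of unity in ℂ satisfying 1 + (x·y - 2·(x - y))·(x·y - 1) + (x - y)² = 0 are exactly the following: x a primitive 3rd root of unity and y a primitive 6th root of unity; or y a primitive 10th root of unity and x = y² or x = y⁻²; or y a primitive 12th root of unity and x = y or x = y⁻¹. -/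
open Complex Polynomial

lemma real_eq_one_of_sq {r : ℝ} (h0 : 0 ≤ r) (h : r ^ 2 = 1) : r = 1 := by
  have h' : r * r = 1 := by nlinarith
  rcases mul_self_eq_one_iff.mp h' with h'' | h''
  · exact h''
  · linarith

lemma abs_eq_one_of_pow_eq_one {z : ℂ} {n : ℕ} (hn : 0 < n) (h : z ^ n = 1) :
    ‖z‖ = 1 := by
  have h1 : (‖z‖) ^ n = 1 := by rw [← norm_pow, h, norm_one]
  rcases lt_trichotomy ‖z‖ 1 with hlt | heq | hgt
  · have := pow_lt_one₀ (norm_nonneg z) hlt hn.ne'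
    rw [h1] at this; exact absurd this (lt_irrefl 1)
  · exact heq
  · have := one_lt_pow₀ hgt hn.ne'
    rw [h1] at this; exact absurd this (lt_irrefl 1)

lemma isPrimitiveRoot_of_proper {z : ℂ} {n : ℕ} (hn : 0 < n) (h1 : z ^ n = 1)
    (h2 : ∀ d, d ∣ n → d ≠ n → z ^ d ≠ 1) : IsPrimitiveRoot z n := by
  have hdvd : orderOf z ∣ n := orderOf_dvd_of_pow_eq_one h1
  have : orderOf z = n := by
    by_contra hne
    exact h2 _ hdvd hne (pow_orderOf_eq_one z)
  exact this ▸ IsPrimitiveRoot.orderOf z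

lemma prim3ofPhi {z : ℂ} (h : z ^ 2 + z + 1 = 0) : IsPrimitiveRoot z 3 := by
  apply isPrimitiveRoot_of_proper (by norm_num)
  · linear_combination (z - 1) * h
  · intro d hd hne
    have : d = 1 := by
      have h2 := Nat.le_of_dvd (by norm_num) hd
      have h3 := Nat.pos_of_dvd_of_pos hd (by norm_num)
      interval_cases d <;> revert hd hne <;> decide
    subst this
    intro hz
    have : (1 : ℂ) = 0 := by
      linear_combination (1/3 : ℂ) * h + (-z/3 - 2/3) * hz
    simp at this

lemma prim6ofPhi {z : ℂ} (h : z ^ 2 - z + 1 = 0) : IsPrimitiveRoot z 6 := by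
  apply isPrimitiveRoot_of_proper (by norm_num)
  · linear_combination (z ^ 4 + z ^ 3 - z - 1) * h
  · intro d hd hne
    have : d = 1 ∨ d = 2 ∨ d = 3 := by
      have h2 := Nat.le_of_dvd (by norm_num) hd
      have h3 := Nat.pos_of_dvd_of_pos hd (by norm_num)
      interval_cases d <;> revert hd hne <;> decide
    rcases this with rfl | rfl | rfl <;> intro hz
    · exact one_ne_zero (α := ℂ) (by linear_combination h + (-z) * hz)
    · exact one_ne_zero (α := ℂ) (by linear_combination (z/3 + 2/3) * h + (-z/3 - 1/3) * hz)
    · exact one_ne_zero (α := ℂ) (by linear_combination (z/2 + 1/2) * h + (-1/2 : ℂ) * hz)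

lemma prim10ofPhi {z : ℂ} (h : z ^ 4 - z ^ 3 + z ^ 2 - z + 1 = 0) : IsPrimitiveRoot z 10 := by
  apply isPrimitiveRoot_of_proper (by norm_num)
  · linear_combination (z ^ 6 + z ^ 5 - z - 1) * h
  · intro d hd hne
    have : d = 1 ∨ d = 2 ∨ d = 5 := by
      have h2 := Nat.le_of_dvd (by norm_num) hd
      have h3 := Nat.pos_of_dvd_of_pos hd (by norm_num)
      interval_cases d <;> revert hd hne <;> decide
    rcases this with rfl | rfl | rfl <;> intro hz
    · exact one_ne_zero (α := ℂ) (by linear_combination h + (-z ^ 3 - z) * hz)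
    · exact one_ne_zero (α := ℂ)
        (by linear_combination (2*z/5 + 3/5) * h + (-2*z^3/5 - z^2/5 - z/5 - 2/5) * hz)
    · exact one_ne_zero (α := ℂ) (by linear_combination (z/2 + 1/2) * h + (-1/2 : ℂ) * hz)

lemma prim12ofPhi {z : ℂ} (h : z ^ 4 - z ^ 2 + 1 = 0) : IsPrimitiveRoot z 12 := by
  apply isPrimitiveRoot_of_proper (by norm_num)
  · linear_combination (z ^ 8 + z ^ 6 - z ^ 2 - 1) * h
  · intro d hd hne
    have : d = 1 ∨ d = 2 ∨ d = 3 ∨ d = 4 ∨ d = 6 := by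
      have h2 := Nat.le_of_dvd (by norm_num) hd
      have h3 := Nat.pos_of_dvd_of_pos hd (by norm_num)
      interval_cases d <;> revert hd hne <;> decide
    rcases this with rfl | rfl | rfl | rfl | rfl <;> intro hz
    · exact one_ne_zero (α := ℂ) (by linear_combination h + (-z ^ 3 - z ^ 2) * hz)
    · exact one_ne_zero (α := ℂ) (by linear_combination h + (-z ^ 2) * hz)
    · exact one_ne_zero (α := ℂ)
        (by linear_combination (z^2/2 + 1/2) * h + (-z^3/2 - 1/2) * hz)
    · exact one_ne_zero (α := ℂ)
        (by linear_combination (z^2/3 + 2/3) * h + (-z^2/3 - 1/3) * hz)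
    · exact one_ne_zero (α := ℂ) (by linear_combination (z^2/2 + 1/2) * h + (-1/2 : ℂ) * hz)

lemma phi3ofPrim {z : ℂ} (h : IsPrimitiveRoot z 3) : z ^ 2 + z + 1 = 0 := by
  have h3 : z ^ 3 = 1 := h.pow_eq_one
  have h1 : z ≠ 1 := h.ne_one (by norm_num)
  have : (z - 1) * (z ^ 2 + z + 1) = 0 := by linear_combination h3
  rcases mul_eq_zero.mp this with hh | hh
  · exact absurd (sub_eq_zero.mp hh) h1
  · exact hh

lemma phi4ofPrim {z : ℂ} (h : IsPrimitiveRoot z 4) : z ^ 2 = -1 := by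
  have h4 : z ^ 4 = 1 := h.pow_eq_one
  have h2 : z ^ 2 ≠ 1 := h.pow_ne_one_of_pos_of_lt (by norm_num) (by norm_num)
  have : (z ^ 2 - 1) * (z ^ 2 + 1) = 0 := by linear_combination h4
  rcases mul_eq_zero.mp this with hh | hh
  · exact absurd (sub_eq_zero.mp hh) h2
  · linear_combination hh

lemma phi5ofPrim {z : ℂ} (h : IsPrimitiveRoot z 5) : z ^ 4 + z ^ 3 + z ^ 2 + z + 1 = 0 := by
  have h5 : z ^ 5 = 1 := h.pow_eq_one
  have h1 : z ≠ 1 := h.ne_one (by norm_num)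
  have : (z - 1) * (z ^ 4 + z ^ 3 + z ^ 2 + z + 1) = 0 := by linear_combination h5
  rcases mul_eq_zero.mp this with hh | hh
  · exact absurd (sub_eq_zero.mp hh) h1
  · exact hh

lemma phi6ofPrim {z : ℂ} (h : IsPrimitiveRoot z 6) : z ^ 2 - z + 1 = 0 := by
  have h6 : z ^ 6 = 1 := h.pow_eq_one
  have h3 : z ^ 3 ≠ 1 := h.pow_ne_one_of_pos_of_lt (by norm_num) (by norm_num)
  have h2 : z ^ 2 ≠ 1 := h.pow_ne_one_of_pos_of_lt (by norm_num) (by norm_num)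
  have hc : (z ^ 3 - 1) * (z ^ 3 + 1) = 0 := by linear_combination h6
  have hz3 : z ^ 3 = -1 := by
    rcases mul_eq_zero.mp hc with hh | hh
    · exact absurd (sub_eq_zero.mp hh) h3
    · linear_combination hh
  have hc2 : (z + 1) * (z ^ 2 - z + 1) = 0 := by linear_combination hz3
  rcases mul_eq_zero.mp hc2 with hh | hh
  · exfalso
    apply h2
    have : z = -1 := by linear_combination hh
    rw [this]; ring
  · exact hh

lemma phi10ofPrim {z : ℂ} (h : IsPrimitiveRoot z 10) : z ^ 4 - z ^ 3 + z ^ 2 - z + 1 = 0 := by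
  have h10 : z ^ 10 = 1 := h.pow_eq_one
  have h5 : z ^ 5 ≠ 1 := h.pow_ne_one_of_pos_of_lt (by norm_num) (by norm_num)
  have h2 : z ^ 2 ≠ 1 := h.pow_ne_one_of_pos_of_lt (by norm_num) (by norm_num)
  have hc : (z ^ 5 - 1) * (z ^ 5 + 1) = 0 := by linear_combination h10
  have hz5 : z ^ 5 = -1 := by
    rcases mul_eq_zero.mp hc with hh | hh
    · exact absurd (sub_eq_zero.mp hh) h5
    · linear_combination hh
  have hc2 : (z + 1) * (z ^ 4 - z ^ 3 + z ^ 2 - z + 1) = 0 := by linear_combination hz5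
  rcases mul_eq_zero.mp hc2 with hh | hh
  · exfalso
    apply h2
    have : z = -1 := by linear_combination hh
    rw [this]; ring
  · exact hh

lemma phi12ofPrim {z : ℂ} (h : IsPrimitiveRoot z 12) : z ^ 4 - z ^ 2 + 1 = 0 := by
  have h12 : z ^ 12 = 1 := h.pow_eq_one
  have h6 : z ^ 6 ≠ 1 := h.pow_ne_one_of_pos_of_lt (by norm_num) (by norm_num)
  have h4 : z ^ 4 ≠ 1 := h.pow_ne_one_of_pos_of_lt (by norm_num) (by norm_num)
  have hc : (z ^ 6 - 1) * (z ^ 6 + 1) = 0 := by linear_combination h12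
  have hz6 : z ^ 6 = -1 := by
    rcases mul_eq_zero.mp hc with hh | hh
    · exact absurd (sub_eq_zero.mp hh) h6
    · linear_combination hh
  have hc2 : (z ^ 2 + 1) * (z ^ 4 - z ^ 2 + 1) = 0 := by linear_combination hz6
  rcases mul_eq_zero.mp hc2 with hh | hh
  · exfalso
    apply h4
    have : z ^ 2 = -1 := by linear_combination hh
    calc z ^ 4 = (z ^ 2) ^ 2 := by ring
    _ = 1 := by rw [this]; ring
  · exact hh

/-- Cyclotomic points on the curve `1 + (xy - 2(x-y))(xy - 1) + (x-y)² = 0`. -/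
theorem cyclotomic_points_curve_one (x y : ℂ) :
    (IsRootOfUnity x ∧ IsRootOfUnity y ∧
      1 + (x * y - 2 * (x - y)) * (x * y - 1) + (x - y) ^ 2 = 0) ↔
    ((IsPrimitiveRoot x 3 ∧ IsPrimitiveRoot y 6) ∨
     (IsPrimitiveRoot y 10 ∧ (x = y ^ 2 ∨ x = (y ^ 2)⁻¹)) ∨
     (IsPrimitiveRoot y 12 ∧ (x = y ∨ x = y⁻¹))) := by
  constructor
  · intro ⟨hxru, hyru, heq⟩
    obtain ⟨nx, hnx, hx1⟩ := hxru
    obtain ⟨ny, hny, hy1⟩ := hyru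
    have hx0 : x ≠ 0 := by
      intro h; rw [h, zero_pow hnx.ne'] at hx1; exact zero_ne_one hx1
    have hy0 : y ≠ 0 := by
      intro h; rw [h, zero_pow hny.ne'] at hy1; exact zero_ne_one hy1
    have habsx : ‖x‖ = 1 := abs_eq_one_of_pow_eq_one hnx hx1
    have habsy : ‖y‖ = 1 := abs_eq_one_of_pow_eq_one hny hy1
    have he' : (x + 1) ^ 2 * (y - 1) ^ 2 + x * y = 0 := by linear_combination heq
    have hxm1 : x ≠ -1 := by
      intro h
      apply hy0
      linear_combination -he' + ((x + 1) * (y - 1) ^ 2 + y) * h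
    have hyne1 : y ≠ 1 := by
      intro h
      apply hx0
      linear_combination he' + (-x - (x + 1) ^ 2 * (y - 1)) * h
    set w : ℂ := (x + 1) * (y - 1) with hw_def
    have hw0 : w ≠ 0 :=
      mul_ne_zero (fun h => hxm1 (by linear_combination h)) (sub_ne_zero.mpr hyne1)
    have key1 : w ^ 2 = -(x * y) := by rw [hw_def]; linear_combination he'
    have habsw : ‖w‖ = 1 := by
      apply real_eq_one_of_sq (norm_nonneg w)
      rw [← norm_pow, key1, norm_neg, norm_mul, habsx, habsy]
      norm_num
    set u : ℂ := x / w with hu_def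
    have hu0 : u ≠ 0 := div_ne_zero hx0 hw0
    have hx_eq : u * w = x := by rw [hu_def]; exact div_mul_cancel₀ x hw0
    have habsu : ‖u‖ = 1 := by rw [hu_def, norm_div, habsx, habsw]; norm_num
    have huy : u * y = -w := by
      apply mul_left_cancel₀ hw0
      linear_combination y * hx_eq + key1
    have hP : x ^ 2 + w ^ 2 + x * w ^ 2 + x + x * w = 0 := by
      have hw_def2 : w = x * y - x + y - 1 := by rw [hw_def]; ring
      linear_combination (1 + x) * key1 + x * hw_def2
    have hrel : u ^ 2 * w + u * w ^ 2 + u * w + u + w = 0 := by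
      have h2 : (u ^ 2 * w + u * w ^ 2 + u * w + u + w) * w = 0 := by
        linear_combination hP + (u * w + x + w ^ 2 + w + 1) * hx_eq
      rcases mul_eq_zero.mp h2 with h | h
      · exact h
      · exact absurd h hw0
    have hu_ne1 : u ≠ 1 := by
      intro h1
      rw [h1] at hrel
      have hq : (3 : ℂ) * w = -(1 + w ^ 2) := by linear_combination hrel
      have h3 : (3 : ℝ) = ‖1 + w ^ 2‖ := by
        calc (3 : ℝ) = ‖(3 : ℂ) * w‖ := by
              rw [norm_mul, habsw]; simp
        _ = ‖1 + w ^ 2‖ := by rw [hq, norm_neg]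
      have h4 : ‖1 + w ^ 2‖ ≤ 2 := by
        calc ‖1 + w ^ 2‖ ≤ ‖(1 : ℂ)‖ + ‖w ^ 2‖ :=
              norm_add_le _ _
        _ = 2 := by rw [norm_one, norm_pow, habsw]; norm_num
      linarith
    clear_value w u
    have hw1 : w ^ (4 * nx * ny) = 1 := by
      calc w ^ (4 * nx * ny) = ((w ^ 2) ^ 2) ^ (nx * ny) := by ring
      _ = ((-(x * y)) ^ 2) ^ (nx * ny) := by rw [key1]
      _ = ((x ^ nx) ^ ny * (y ^ ny) ^ nx) ^ 2 := by ring
      _ = 1 := by rw [hx1, hy1]; norm_num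
    have hwfin : IsOfFinOrder w :=
      isOfFinOrder_iff_pow_eq_one.mpr ⟨4 * nx * ny, by positivity, hw1⟩
    have hufin : IsOfFinOrder u := by
      refine isOfFinOrder_iff_pow_eq_one.mpr ⟨4 * nx * ny * nx, by positivity, ?_⟩
      have hx2 : x ^ (4 * nx * ny * nx) = 1 := by
        rw [show 4 * nx * ny * nx = nx * (4 * nx * ny) by ring, pow_mul, hx1, one_pow]
      have hw2 : w ^ (4 * nx * ny * nx) = 1 := by
        rw [pow_mul, hw1, one_pow]
      have h3 : u ^ (4 * nx * ny * nx) * w ^ (4 * nx * ny * nx) = x ^ (4 * nx * ny * nx) := by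
        rw [← mul_pow, hx_eq]
      rw [hw2, mul_one, hx2] at h3
      exact h3
    have hm0 : 0 < orderOf u := hufin.orderOf_pos
    have hl0 : 0 < orderOf w := hwfin.orderOf_pos
    set n := Nat.lcm (orderOf u) (orderOf w) with hn_def
    have hn0 : 0 < n := Nat.lcm_pos hm0 hl0
    haveI : NeZero n := ⟨hn0.ne'⟩
    have hun : u ^ n = 1 := orderOf_dvd_iff_pow_eq_one.mp (Nat.dvd_lcm_left _ _)
    have hwn : w ^ n = 1 := orderOf_dvd_iff_pow_eq_one.mp (Nat.dvd_lcm_right _ _)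
    have hmn' : orderOf u ∣ n := Nat.dvd_lcm_left _ _
    clear_value n
    have hkey : ∀ k : ℕ, Nat.Coprime k n →
        (u ^ k).re + (u ^ k).re + (w ^ k).re + (w ^ k).re + 1 = 0 := by
      have hζ : IsPrimitiveRoot (Complex.exp (2 * Real.pi * Complex.I / n)) n :=
        Complex.isPrimitiveRoot_exp n hn0.ne'
      set ζ : ℂ := Complex.exp (2 * Real.pi * Complex.I / n) with hζ_def
      clear_value ζ
      obtain ⟨a, ha, hau⟩ := hζ.eq_pow_of_pow_eq_one hun
      obtain ⟨b, hb, hbw⟩ := hζ.eq_pow_of_pow_eq_one hwn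
      set P : Polynomial ℚ := Polynomial.X ^ (2 * a + b) + Polynomial.X ^ (a + 2 * b) +
        Polynomial.X ^ (a + b) + Polynomial.X ^ a + Polynomial.X ^ b with hP_def
      have hPz : ∀ z : ℂ, (Polynomial.aeval z) P =
          z ^ (2 * a + b) + z ^ (a + 2 * b) + z ^ (a + b) + z ^ a + z ^ b := by
        intro z; simp [hP_def]
      have hPζ : (Polynomial.aeval ζ) P = 0 := by
        rw [hPz]
        rw [← hau] at hrel
        rw [← hbw] at hrel
        linear_combination hrel
      have hint : IsIntegral ℚ ζ := (hζ.isIntegral hn0).tower_top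
      have hdvd : minpoly ℚ ζ ∣ P := minpoly.dvd ℚ ζ hPζ
      intro k hk
      have hζk : IsPrimitiveRoot (ζ ^ k) n := hζ.pow_of_coprime k hk
      have hmeq : minpoly ℚ (ζ ^ k) = minpoly ℚ ζ := by
        rw [← Polynomial.cyclotomic_eq_minpoly_rat hζk hn0,
          ← Polynomial.cyclotomic_eq_minpoly_rat hζ hn0]
      have hPζk : (Polynomial.aeval (ζ ^ k)) P = 0 := by
        obtain ⟨Q, hQ⟩ := hdvd
        rw [hQ, map_mul, ← hmeq, minpoly.aeval, zero_mul]
      rw [hPz] at hPζk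
      have hu_k : (ζ ^ k) ^ a = u ^ k := by rw [← hau]; ring
      have hw_k : (ζ ^ k) ^ b = w ^ k := by rw [← hbw]; ring
      have hrelk : (u ^ k) ^ 2 * w ^ k + u ^ k * (w ^ k) ^ 2 + u ^ k * w ^ k
          + u ^ k + w ^ k = 0 := by
        rw [← hu_k, ← hw_k]
        linear_combination hPζk
      have hu' : ‖u ^ k‖ = 1 := by rw [norm_pow, habsu, one_pow]
      have hw' : ‖w ^ k‖ = 1 := by rw [norm_pow, habsw, one_pow]
      have huk0 : u ^ k ≠ 0 := pow_ne_zero _ hu0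
      have hwk0 : w ^ k ≠ 0 := pow_ne_zero _ hw0
      have hconju : (starRingEnd ℂ) (u ^ k) = (u ^ k)⁻¹ := by
        apply eq_inv_of_mul_eq_one_left
        rw [mul_comm, Complex.mul_conj, Complex.normSq_eq_norm_sq, hu']
        norm_num
      have hconjw : (starRingEnd ℂ) (w ^ k) = (w ^ k)⁻¹ := by
        apply eq_inv_of_mul_eq_one_left
        rw [mul_comm, Complex.mul_conj, Complex.normSq_eq_norm_sq, hw']
        norm_num
      have hC : u ^ k + (starRingEnd ℂ) (u ^ k) + w ^ k + (starRingEnd ℂ) (w ^ k) + 1 = 0 := by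
        rw [hconju, hconjw]
        field_simp
        linear_combination hrelk
      have hre := congrArg Complex.re hC
      simpa only [Complex.add_re, Complex.one_re, Complex.zero_re, ← map_pow,
        Complex.conj_re] using hre
    have hm6 : orderOf u ≤ 6 := by
      by_contra hgt
      push_neg at hgt
      have hu_prim : IsPrimitiveRoot u (orderOf u) := IsPrimitiveRoot.orderOf u
      haveI : NeZero (orderOf u) := ⟨hm0.ne'⟩
      have hξ : IsPrimitiveRoot (Complex.exp (2 * Real.pi * Complex.I / (orderOf u))) (orderOf u) :=
        Complex.isPrimitiveRoot_exp (orderOf u) hm0.ne'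
      set ξ : ℂ := Complex.exp (2 * Real.pi * Complex.I / (orderOf u)) with hξ_def
      obtain ⟨j, hj, hju⟩ := hu_prim.eq_pow_of_pow_eq_one hξ.pow_eq_one
      have hξ' : IsPrimitiveRoot (u ^ j) (orderOf u) := by rw [hju]; exact hξ
      have hjc : Nat.Coprime j (orderOf u) := (hu_prim.pow_iff_coprime hm0 j).mp hξ'
      have hmn : orderOf u ∣ n := hmn'
      obtain ⟨K, hK⟩ := ZMod.unitsMap_surjective hmn (ZMod.unitOfCoprime j hjc)
      have hkc : Nat.Coprime ((K : ZMod n)).val n := ZMod.val_coe_unit_coprime K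
      have hmod : ((((K : ZMod n)).val : ℕ) : ZMod (orderOf u)) = (j : ZMod (orderOf u)) := by
        have h1 := congrArg (Units.val) hK
        rw [ZMod.coe_unitOfCoprime] at h1
        rw [ZMod.unitsMap_def, Units.coe_map] at h1
        rw [ZMod.natCast_val, ← ZMod.castHom_apply (h := hmn)]
        exact h1
      have hkj : u ^ (((K : ZMod n)).val) = u ^ j := by
        have hmodeq : ((K : ZMod n)).val % orderOf u = j % orderOf u :=
          (ZMod.natCast_eq_natCast_iff _ _ _).mp hmod
        calc u ^ (((K : ZMod n)).val) = u ^ (((K : ZMod n)).val % orderOf u) :=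
              (pow_mod_orderOf u _).symm
        _ = u ^ (j % orderOf u) := by rw [hmodeq]
        _ = u ^ j := pow_mod_orderOf u j
      have hre := hkey _ hkc
      have hwre : -1 ≤ (w ^ (((K : ZMod n)).val)).re := by
        have h1 : |(w ^ (((K : ZMod n)).val)).re| ≤ 1 := by
          have h2 := Complex.abs_re_le_norm (w ^ (((K : ZMod n)).val))
          rw [norm_pow, habsw, one_pow] at h2; exact h2
        linarith [abs_le.mp h1 |>.1]
      have hure : (u ^ (((K : ZMod n)).val)).re ≤ 1 / 2 := by linarith
      rw [hkj, hju] at hure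
      have hξre : ξ.re = Real.cos (2 * Real.pi / (orderOf u)) := by
        rw [hξ_def,
          show 2 * (Real.pi : ℂ) * Complex.I / ((orderOf u : ℕ) : ℂ) =
            ((2 * Real.pi / ((orderOf u : ℕ) : ℝ) : ℝ) : ℂ) * Complex.I by push_cast; ring]
        exact Complex.exp_ofReal_mul_I_re _
      rw [hξre] at hure
      have hmR : (0 : ℝ) < (orderOf u : ℝ) := by exact_mod_cast hm0
      have h7 : (7 : ℝ) ≤ (orderOf u : ℝ) := by exact_mod_cast hgt
      have hpi := Real.pi_pos
      have hlt : 2 * Real.pi / (orderOf u : ℝ) < Real.pi / 3 := by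
        rw [div_lt_div_iff₀ hmR (by norm_num)]
        nlinarith
      have hcos := Real.cos_lt_cos_of_nonneg_of_le_pi (by positivity) (by linarith) hlt
      rw [Real.cos_pi_div_three] at hcos
      linarith
    have hm1 : orderOf u ≠ 1 := fun h1 => hu_ne1 (orderOf_eq_one_iff.mp h1)
    have hcase : orderOf u = 2 ∨ orderOf u = 3 ∨ orderOf u = 4 ∨ orderOf u = 5 ∨
        orderOf u = 6 := by omega
    rcases hcase with hm | hm | hm | hm | hm
    · -- m = 2
      have hu_prim : IsPrimitiveRoot u 2 := hm ▸ IsPrimitiveRoot.orderOf u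
      have humpow : u ^ 2 = 1 := hu_prim.pow_eq_one
      have hu2 : u = -1 := by
        have hne := hu_prim.ne_one (by norm_num)
        have hz : (u - 1) * (u + 1) = 0 := by linear_combination humpow
        rcases mul_eq_zero.mp hz with h | h
        · exact absurd (sub_eq_zero.mp h) hne
        · linear_combination h
      have hwq : w ^ 2 - w + 1 = 0 := by
        rw [hu2] at hrel; linear_combination -hrel
      have hyw : y = w := by
        apply mul_left_cancel₀ hu0
        rw [huy, hu2]; ring
      have hxw : x = -w := by rw [← hx_eq, hu2]; ring
      left
      constructor
      · apply prim3ofPhi; rw [hxw]; linear_combination hwq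
      · apply prim6ofPhi; rw [hyw]; exact hwq
    · -- m = 3
      have hu_prim : IsPrimitiveRoot u 3 := hm ▸ IsPrimitiveRoot.orderOf u
      have hu3 : u ^ 3 = 1 := hu_prim.pow_eq_one
      have hpu : u ^ 2 + u + 1 = 0 := phi3ofPrim hu_prim
      have hw2 : w ^ 2 = -1 := by
        have h1 : u * (w ^ 2 + 1) = 0 := by linear_combination hrel - w * hpu
        rcases mul_eq_zero.mp h1 with h | h
        · exact absurd h hu0
        · linear_combination h
      have hyv : y = -w * u ^ 2 := by
        apply mul_left_cancel₀ hu0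
        rw [huy]
        linear_combination w * hu3
      have hpy : y ^ 4 - y ^ 2 + 1 = 0 := by
        rw [hyv]
        linear_combination (u ^ 8 * w ^ 2 - u ^ 8 - u ^ 4) * hw2 +
          (u ^ 6 - u ^ 5 + u ^ 3 - u + 1) * hpu
      have hxy : x * y = 1 := by
        rw [← hx_eq]
        linear_combination w * huy - hw2
      right; right
      refine ⟨prim12ofPhi hpy, Or.inr ?_⟩
      exact eq_inv_of_mul_eq_one_left hxy
    · -- m = 4
      have hu_prim : IsPrimitiveRoot u 4 := hm ▸ IsPrimitiveRoot.orderOf u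
      have hu2 : u ^ 2 = -1 := phi4ofPrim hu_prim
      have hww : w ^ 2 + w + 1 = 0 := by
        have h1 : u * (w ^ 2 + w + 1) = 0 := by linear_combination hrel - w * hu2
        rcases mul_eq_zero.mp h1 with h | h
        · exact absurd h hu0
        · exact h
      have hyx : x = y := by
        have h1 : u * (x - y) = 0 := by linear_combination (-u) * hx_eq - huy + w * hu2
        rcases mul_eq_zero.mp h1 with h | h
        · exact absurd h hu0
        · exact sub_eq_zero.mp h
      have hyv : y = w * u := by
        apply mul_left_cancel₀ hu0
        rw [huy]
        linear_combination (-w) * hu2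
      have hpy : y ^ 4 - y ^ 2 + 1 = 0 := by
        rw [hyv]
        linear_combination (u ^ 2 * w ^ 4 - w ^ 4 - w ^ 2) * hu2 + (w ^ 2 - w + 1) * hww
      right; right
      exact ⟨prim12ofPhi hpy, Or.inl hyx⟩
    · -- m = 5
      have hu_prim : IsPrimitiveRoot u 5 := hm ▸ IsPrimitiveRoot.orderOf u
      have hu5 : u ^ 5 = 1 := hu_prim.pow_eq_one
      have hpu : u ^ 4 + u ^ 3 + u ^ 2 + u + 1 = 0 := phi5ofPrim hu_prim
      have hfac : (w - u ^ 2) * (w - u ^ 3) = 0 := by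
        have h1 : u * ((w - u ^ 2) * (w - u ^ 3)) = 0 := by
          linear_combination hrel + (u ^ 2 - u - w) * hpu
        rcases mul_eq_zero.mp h1 with h | h
        · exact absurd h hu0
        · exact h
      rcases mul_eq_zero.mp hfac with h | h
      · have hwv : w = u ^ 2 := sub_eq_zero.mp h
        have hyv : y = -u := by
          apply mul_left_cancel₀ hu0
          rw [huy]
          linear_combination -hwv
        have hpy : y ^ 4 - y ^ 3 + y ^ 2 - y + 1 = 0 := by
          rw [hyv]; linear_combination hpu
        have hxy2 : x * y ^ 2 = 1 := by
          rw [← hx_eq, hyv, hwv]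
          linear_combination hu5
        right; left
        refine ⟨prim10ofPhi hpy, Or.inr ?_⟩
        exact eq_inv_of_mul_eq_one_left hxy2
      · have hwv : w = u ^ 3 := sub_eq_zero.mp h
        have hyv : y = -u ^ 2 := by
          apply mul_left_cancel₀ hu0
          rw [huy]
          linear_combination -hwv
        have hpy : y ^ 4 - y ^ 3 + y ^ 2 - y + 1 = 0 := by
          rw [hyv]
          linear_combination (u ^ 4 - u ^ 3 + u ^ 2 - u + 1) * hpu
        have hxy2 : x = y ^ 2 := by
          rw [← hx_eq, hyv, hwv]; ring
        right; left
        exact ⟨prim10ofPhi hpy, Or.inl hxy2⟩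
    · -- m = 6
      have hu_prim : IsPrimitiveRoot u 6 := hm ▸ IsPrimitiveRoot.orderOf u
      have hpu : u ^ 2 - u + 1 = 0 := phi6ofPrim hu_prim
      have hwv : w = -1 := by
        have h1 : u * (w + 1) ^ 2 = 0 := by linear_combination hrel - w * hpu
        rcases mul_eq_zero.mp h1 with h | h
        · exact absurd h hu0
        · have h2 := pow_eq_zero_iff (n := 2) (by norm_num) |>.mp h
          linear_combination h2
      have hxv : x = -u := by rw [← hx_eq, hwv]; ring
      have hyu : u * y = 1 := by rw [huy, hwv]; ring
      have hpy : y ^ 2 - y + 1 = 0 := by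
        have h2 : u ^ 2 * (y ^ 2 - y + 1) = 0 := by
          linear_combination (u * y + 1 - u) * hyu + hpu
        rcases mul_eq_zero.mp h2 with h | h
        · exact absurd h (pow_ne_zero 2 hu0)
        · exact h
      left
      refine ⟨prim3ofPhi ?_, prim6ofPhi hpy⟩
      rw [hxv]; linear_combination hpu
  · rintro (⟨hx3, hy6⟩ | ⟨hy10, hx⟩ | ⟨hy12, hx⟩)
    · refine ⟨⟨3, by norm_num, hx3.pow_eq_one⟩, ⟨6, by norm_num, hy6.pow_eq_one⟩, ?_⟩
      have hpx := phi3ofPrim hx3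
      have hpy := phi6ofPrim hy6
      linear_combination (y ^ 2 - 2 * y + 1) * hpx + x * hpy
    · have hy0 : y ≠ 0 := hy10.ne_zero (by norm_num)
      have hpy := phi10ofPrim hy10
      have hy1 : y ^ 10 = 1 := hy10.pow_eq_one
      refine ⟨?_, ⟨10, by norm_num, hy1⟩, ?_⟩
      · rcases hx with rfl | rfl
        · exact ⟨10, by norm_num, by rw [← pow_mul, show 2 * 10 = 10 * 2 by ring, pow_mul, hy1]; ring⟩
        · exact ⟨10, by norm_num, by rw [inv_pow, ← pow_mul, show 2 * 10 = 10 * 2 by ring, pow_mul, hy1]; simp⟩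
      · rcases hx with rfl | rfl
        · linear_combination (y ^ 2 - y + 1) * hpy
        · have h1 : (y ^ 2)⁻¹ * y ^ 2 = 1 := inv_mul_cancel₀ (pow_ne_zero 2 hy0)
          have hx8 : (y ^ 2)⁻¹ = y ^ 8 := by
            linear_combination y ^ 8 * h1 - (y ^ 2)⁻¹ * hy1
          rw [hx8]
          linear_combination (1 - y - y^2 + y^3 - y^5 + y^6 + y^7 + y^8 - y^9 + y^11 - y^12 - y^13 + y^14) * hpy
    · have hy0 : y ≠ 0 := hy12.ne_zero (by norm_num)
      have hpy := phi12ofPrim hy12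
      have hy1 : y ^ 12 = 1 := hy12.pow_eq_one
      refine ⟨?_, ⟨12, by norm_num, hy1⟩, ?_⟩
      · rcases hx with rfl | rfl
        · exact ⟨12, by norm_num, hy1⟩
        · exact ⟨12, by norm_num, by rw [inv_pow, hy1]; simp⟩
      · rcases hx with rfl | rfl
        · linear_combination hpy
        · have h1 : y⁻¹ * y = 1 := inv_mul_cancel₀ hy0
          have hx11 : y⁻¹ = y ^ 11 := by
            linear_combination y ^ 11 * h1 - y⁻¹ * hy1
          rw [hx11]
          linear_combination (1 - 2*y + 2*y^2 - 2*y^3 + y^4 - y^6 + 2*y^7 - 2*y^8 + 2*y^9 - y^10 + 2*y^11 - 2*y^12 + 2*y^13 - y^14 + y^16 - 2*y^17 + 2*y^18 - 2*y^19 + y^20) * hpy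
end
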